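/- arXiv:1501.00894 — 2 statements merged into one kernel-verified Lean document; each statement's English description precedes it below -/
import Mathlib

section
/- Let t be a linear term over a signature F and variables V, let G be an acyclic term graph over F, and let n be a node of G. If there exists a homomorphism φ from the canonical tree T(t) to the sub-graph G↾n of G rooted at n, then there exists a substitution σ such that tσ equals the unfolding [n]_G of G at n; moreover σ can be chosen so that σ(x) = [φ(n_x)]_G for every variable x occurring in t. -/
namespace TGraph

/-- Terms over a signature `F` and variables `V`. -/
inductive Tm (F V : Type) : Type
  | var : V → Tm F V
  | app : F → List (Tm F V) → Tm F V

/-- Substitution. -/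
def subst {F V : Type} (σ : V → Tm F V) : Tm F V → Tm F V
  | .var x => σ x
  | .app f ts => .app f (ts.attach.map fun t => subst σ t.1)
decreasing_by
  all_goals simp_wf
  all_goals (have := List.sizeOf_lt_of_mem t.2; omega)

/-- `SubAt t p u`: `u` is the subterm of `t` at position `p`.  The positions of `t`
are exactly the nodes of the canonical tree `T(t)` of `t`. -/
inductive SubAt {F V : Type} : Tm F V → List ℕ → Tm F V → Prop
  | refl (t : Tm F V) : SubAt t [] t
  | step {f : F} {ts : List (Tm F V)} {i : ℕ} {t u : Tm F V} {p : List ℕ} :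
      ts[i]? = some t → SubAt t p u → SubAt (.app f ts) (i :: p) u

/-- Linear terms: every variable occurs at most once. -/
def Linear {F V : Type} (t : Tm F V) : Prop :=
  ∀ (x : V) (p q : List ℕ), SubAt t p (.var x) → SubAt t q (.var x) → p = q

/-- A term graph over the signature `F` (with arities `ar`) and variables `V`, with
nodes drawn from `L`: a labeled graph compatible with the signature. -/
structure TermGraph (F V L : Type) (ar : F → ℕ) where
  nodes : Set L
  lab : L → F ⊕ V
  succ : L → List L
  compat_fun : ∀ n ∈ nodes, ∀ f, lab n = Sum.inl f →
    (succ n).length = ar f ∧ ∀ m ∈ succ n, m ∈ nodes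
  compat_var : ∀ n ∈ nodes, ∀ v, lab n = Sum.inr v → succ n = []

/-- Acyclicity of a term graph: the successor relation is well-founded. -/
def Acyclic {F V L : Type} {ar : F → ℕ} (G : TermGraph F V L ar) : Prop :=
  WellFounded (fun a b => b ∈ G.nodes ∧ a ∈ G.succ b)

/-- `Unfolds G n t`: `t = [n]_G` is the unfolding of the term graph `G` at node `n`. -/
inductive Unfolds {F V L : Type} {ar : F → ℕ} (G : TermGraph F V L ar) : L → Tm F V → Prop
  | var {n : L} {x : V} : G.lab n = Sum.inr x → Unfolds G n (.var x)
  | app {n : L} {f : F} {ts : List (Tm F V)} : G.lab n = Sum.inl f →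
      (G.succ n).length = ts.length →
      (∀ (i : ℕ) (m : L) (t : Tm F V), (G.succ n)[i]? = some m → ts[i]? = some t →
        Unfolds G m t) →
      Unfolds G n (.app f ts)

/-- `TreeHom t G n φ`: `φ` is a homomorphism from the canonical tree `T(t)` of `t`
(whose nodes are the positions of `t`) to the sub-graph `G↾n` of `G` rooted at `n`:
the root `[]` of `T(t)` is mapped to `n`, nodes are mapped to nodes, and `φ` is morphic
at every position not labeled by a variable. -/
def TreeHom {F V L : Type} {ar : F → ℕ} (t : Tm F V) (G : TermGraph F V L ar) (n : L)
    (φ : List ℕ → L) : Prop :=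
  φ [] = n ∧
  (∀ p u, SubAt t p u → φ p ∈ G.nodes) ∧
  (∀ p f ts, SubAt t p (.app f ts) →
    G.lab (φ p) = Sum.inl f ∧ (G.succ (φ p)).length = ts.length ∧
    ∀ i : ℕ, i < ts.length → (G.succ (φ p))[i]? = some (φ (p ++ [i])))

end TGraph

namespace TGraph

theorem exists_unfolds {F V L : Type} {ar : F → ℕ} (G : TermGraph F V L ar)
    (hacyc : Acyclic G) : ∀ n ∈ G.nodes, ∃ u, Unfolds G n u := by
  intro n
  induction n using hacyc.induction with
  | _ n ih =>
    intro hn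
    cases hlab : G.lab n with
    | inr x => exact ⟨.var x, .var hlab⟩
    | inl f =>
      have hs := G.compat_fun n hn f hlab
      have hchild : ∀ m ∈ G.succ n, ∃ u, Unfolds G m u := fun m hm =>
        ih m ⟨hn, hm⟩ (hs.2 m hm)
      refine ⟨.app f ((G.succ n).attach.map fun m => (hchild m.1 m.2).choose),
        .app hlab (by simp) ?_⟩
      intro i m t hm ht
      have hi : i < (G.succ n).length := by
        by_contra h
        rw [List.getElem?_eq_none (by omega)] at hm
        cases hm
      have hm' : (G.succ n)[i] = m := by
        rw [List.getElem?_eq_getElem hi] at hm; exact Option.some.inj hm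
      have ht' : ((G.succ n).attach.map fun m => (hchild m.1 m.2).choose)[i]?
          = some ((hchild (G.succ n)[i] (List.getElem_mem hi)).choose) := by
        rw [List.getElem?_eq_getElem (by simpa using hi)]
        simp
      rw [ht'] at ht
      have := (hchild (G.succ n)[i] (List.getElem_mem hi)).choose_spec
      rw [Option.some.inj ht] at this
      rwa [hm'] at this

theorem key {F V L : Type} {ar : F → ℕ} (G : TermGraph F V L ar)
    (σ : V → Tm F V) (φ : List ℕ → L) :
    ∀ t : Tm F V, ∀ p : List ℕ,
    (∀ x q, SubAt t q (.var x) → Unfolds G (φ (p ++ q)) (σ x)) →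
    (∀ q f ts, SubAt t q (.app f ts) →
      G.lab (φ (p ++ q)) = Sum.inl f ∧ (G.succ (φ (p ++ q))).length = ts.length ∧
      ∀ i : ℕ, i < ts.length → (G.succ (φ (p ++ q)))[i]? = some (φ (p ++ q ++ [i]))) →
    Unfolds G (φ p) (subst σ t) := by
  intro t
  induction t using subst.induct with
  | case1 x =>
    intro p hvar _
    have := hvar x [] (.refl _)
    rw [List.append_nil] at this
    rw [subst]
    exact this
  | case2 f ts ih =>
    intro p hvar happ
    obtain ⟨hlab, hlen, hsucc⟩ := happ [] f ts (.refl _)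
    rw [List.append_nil] at hlab hlen hsucc
    rw [subst]
    refine .app hlab (by simpa using hlen) ?_
    intro i m u hm hu
    have hi : i < ts.length := by
      by_contra h
      rw [List.getElem?_eq_none (by simp; omega)] at hu
      cases hu
    have hti : ts[i]? = some ts[i] := List.getElem?_eq_getElem hi
    have hu' : u = subst σ ts[i] := by
      rw [List.getElem?_eq_getElem (by simpa using hi)] at hu
      simpa using (Option.some.inj hu).symm
    have hm' : m = φ (p ++ [i]) := by
      rw [hsucc i hi] at hm; exact (Option.some.inj hm).symm
    subst hu' hm'
    have := ih ⟨ts[i], List.getElem_mem hi⟩ (p ++ [i])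
      (fun x q hq => by
        have := hvar x (i :: q) (.step hti hq)
        simpa [List.append_assoc] using this)
      (fun q f' ts' hq => by
        have := happ (i :: q) f' ts' (.step hti hq)
        simpa [List.append_assoc] using this)
    exact this

/-- Proposition 3.(1) / Matching on Graphs, first direction.
If there is a homomorphism `φ` from the canonical tree `T(t)` of a linear term `t` to
the sub-graph of the (finite, acyclic) term graph `G` rooted at the node `n`, then there
is a substitution `σ` with `tσ = [n]_G`; moreover `σ` can be chosen such that
`σ(x) = [φ(n_x)]_G` for every variable `x` occurring in `t`. -/
theorem statement0 {F V L : Type} {ar : F → ℕ} (G : TermGraph F V L ar)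
    (hfin : G.nodes.Finite) (hacyc : Acyclic G)
    (t : Tm F V) (hlin : Linear t) (n : L) (hn : n ∈ G.nodes)
    (φ : List ℕ → L) (hφ : TreeHom t G n φ) :
    ∃ σ : V → Tm F V, Unfolds G n (subst σ t) ∧
      ∀ (x : V) (p : List ℕ), SubAt t p (.var x) → Unfolds G (φ p) (σ x) := by
  classical
  have hex := exists_unfolds G hacyc
  set σ : V → Tm F V := fun x =>
    if h : ∃ p, SubAt t p (.var x) then
      (hex (φ h.choose) (hφ.2.1 _ _ h.choose_spec)).choose
    else .var x with hσ
  have hσspec : ∀ x p, SubAt t p (.var x) → Unfolds G (φ p) (σ x) := by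
    intro x p hp
    have h : ∃ p, SubAt t p (.var x) := ⟨p, hp⟩
    have hpc : h.choose = p := hlin x h.choose p h.choose_spec hp
    simp only [hσ, dif_pos h]
    rw [← hpc]
    exact (hex (φ h.choose) (hφ.2.1 _ _ h.choose_spec)).choose_spec
  refine ⟨σ, ?_, hσspec⟩
  have := key G σ φ t []
    (fun x q hq => by simpa using hσspec x q hq)
    (fun q f ts hq => by simpa using hφ.2.2 q f ts hq)
  rwa [hφ.1] at this

end TGraph
end

section
/- Let t be a linear term over a signature F and variables V, let G be an acyclic term graph over F, and let n be a node of G. If tσ = [n]_G for some substitution σ, then there exists a homomorphism φ from the canonical tree T(t) to the sub-graph G↾n rooted at n, and φ can be chosen so that σ(x) = [φ(n_x)]_G for every variable x occurring in t. -/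
namespace TGraph

theorem subst_app {F V : Type} (σ : V → Tm F V) (f : F) (ts : List (Tm F V)) :
    subst σ (.app f ts) = .app f (ts.map (subst σ)) := by
  rw [subst]
  congr 1
  rw [List.map_attach_eq_pmap]
  exact (List.pmap_eq_map _)

/-- Deterministic walk in `G` from a node along a position. -/
def follow {F V L : Type} {ar : F → ℕ} (G : TermGraph F V L ar) : L → List ℕ → L
  | n, [] => n
  | n, i :: p => follow G ((G.succ n).getD i n) p

theorem follow_append {F V L : Type} {ar : F → ℕ} (G : TermGraph F V L ar)
    (n : L) (p : List ℕ) (i : ℕ) :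
    follow G n (p ++ [i]) = (G.succ (follow G n p)).getD i (follow G n p) := by
  induction p generalizing n with
  | nil => rfl
  | cons j q ih => rw [List.cons_append, follow, ih, follow]

theorem follow_spec {F V L : Type} {ar : F → ℕ} (G : TermGraph F V L ar)
    {t u : Tm F V} {p : List ℕ} (hp : SubAt t p u) :
    ∀ (σ : V → Tm F V) (n : L), n ∈ G.nodes → Unfolds G n (subst σ t) →
      follow G n p ∈ G.nodes ∧ Unfolds G (follow G n p) (subst σ u) := by
  induction hp with
  | refl t => exact fun σ n hn hu => ⟨hn, hu⟩
  | @step f ts i t u p hts _ ih =>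
    intro σ n hn hu
    rw [subst_app] at hu
    cases hu with
    | app hlab hlen hsucc =>
      have hi : i < ts.length := (List.getElem?_eq_some_iff.mp hts).1
      rw [List.length_map] at hlen
      have him : i < (G.succ n).length := by omega
      have hm : (G.succ n)[i]? = some ((G.succ n).getD i n) := by
        rw [List.getD_eq_getElem _ _ him, List.getElem?_eq_getElem him]
      have hmem : (G.succ n).getD i n ∈ G.nodes := by
        have := (G.compat_fun n hn f hlab).2
        refine this _ ?_
        rw [List.getD_eq_getElem _ _ him]
        exact List.getElem_mem him
      have ht' : (ts.map (subst σ))[i]? = some (subst σ t) := by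
        rw [List.getElem?_map, hts]; rfl
      have := hsucc i _ _ hm ht'
      simp only [follow]
      exact ih σ _ hmem this

/-- Proposition 3.(2) / Matching on Graphs, second direction.
If `tσ = [n]_G` for a linear term `t`, a substitution `σ` and a node `n` of the (finite,
acyclic) term graph `G`, then there is a homomorphism `φ` from the canonical tree `T(t)`
to the sub-graph of `G` rooted at `n`; moreover `φ` can be chosen such that
`σ(x) = [φ(n_x)]_G` for every variable `x` occurring in `t`. -/
theorem statement1 {F V L : Type} {ar : F → ℕ} (G : TermGraph F V L ar)
    (hfin : G.nodes.Finite) (hacyc : Acyclic G)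
    (t : Tm F V) (hlin : Linear t) (n : L) (hn : n ∈ G.nodes)
    (σ : V → Tm F V) (hu : Unfolds G n (subst σ t)) :
    ∃ φ : List ℕ → L, TreeHom t G n φ ∧
      ∀ (x : V) (p : List ℕ), SubAt t p (.var x) → Unfolds G (φ p) (σ x) := by
  refine ⟨follow G n, ⟨rfl, fun p u hp => (follow_spec G hp σ n hn hu).1, ?_⟩,
    fun x p hp => ?_⟩
  · intro p f ts hp
    have h := (follow_spec G hp σ n hn hu).2
    have hmem := (follow_spec G hp σ n hn hu).1
    rw [subst_app] at h
    cases h with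
    | app hlab hlen hsucc =>
      rw [List.length_map] at hlen
      refine ⟨hlab, hlen, fun i hi => ?_⟩
      rw [follow_append]
      have him : i < (G.succ (follow G n p)).length := by omega
      rw [List.getD_eq_getElem _ _ him, List.getElem?_eq_getElem him]
  · have h := (follow_spec G hp σ n hn hu).2
    rw [subst] at h
    exact h

end TGraph
end
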